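/- arXiv:1906.04930 — 2 statements merged into one kernel-verified Lean document; each statement's English description precedes it below -/
import Mathlib

section
/- Let τ = min{n ≥ 1 : X_n = 0} (which is almost surely finite). Then S_n → S_τ almost surely as n → ∞, where S_τ(ω) = S_{τ(ω)}(ω), and E(S_τ) = (p − q)/(1 − p + q). -/
open MeasureTheory ProbabilityTheory Filter Real
open scoped ENNReal NNReal Topology Classical

noncomputable section

/-- The σ-algebra `σ(X_1, …, X_n)` generated by the first `n` steps. -/
def sigmaUpTo {Ω : Type*} (X : ℕ → Ω → ℝ) (n : ℕ) : MeasurableSpace Ω :=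
  MeasurableSpace.comap (fun ω (k : Fin n) => X ((k : ℕ) + 1) ω) inferInstance

/-- Weak convergence of a sequence of measures on `ℝ` (convergence in distribution):
integrals of every bounded continuous function converge. -/
def TendstoInDist (μs : ℕ → Measure ℝ) (ν : Measure ℝ) : Prop :=
  ∀ f : BoundedContinuousFunction ℝ ℝ,
    Tendsto (fun n => ∫ x, f x ∂(μs n)) atTop (𝓝 (∫ x, f x ∂ν))

/-- for the ERWD remembering only the most recent step, with
`τ = min{n ≥ 1 : Xₙ = 0}` (a.s. finite), `Sₙ → S_τ` almost surely and
`E(S_τ) = (p−q)/(1−p+q)`. -/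
theorem erwd_recent_step_memory_limit
    {Ω : Type*} [MeasurableSpace Ω] (P : Measure Ω) [IsProbabilityMeasure P]
    (p q r : ℝ) (hp : 0 < p) (hp1 : p < 1) (hq : 0 < q) (hq1 : q < 1)
    (hr : 0 < r) (hr1 : r < 1) (hpqr : p + q + r = 1)
    (X : ℕ → Ω → ℝ) (hXmeas : ∀ n, Measurable (X n))
    (hXval : ∀ n, 1 ≤ n → ∀ ω, X n ω = 1 ∨ X n ω = -1 ∨ X n ω = 0)
    (hX1p : P {ω | X 1 ω = 1} = ENNReal.ofReal p)
    (hX1q : P {ω | X 1 ω = -1} = ENNReal.ofReal q)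
    (hX1r : P {ω | X 1 ω = 0} = ENNReal.ofReal r)
    (hcondp : ∀ n : ℕ, 1 ≤ n →
      P[Set.indicator {ω | X (n + 1) ω = 1} (fun _ => (1 : ℝ)) | sigmaUpTo X n]
        =ᵐ[P] fun ω =>
          p * (if X n ω = 1 then (1 : ℝ) else 0) + q * (if X n ω = -1 then (1 : ℝ) else 0))
    (hcondq : ∀ n : ℕ, 1 ≤ n →
      P[Set.indicator {ω | X (n + 1) ω = -1} (fun _ => (1 : ℝ)) | sigmaUpTo X n]
        =ᵐ[P] fun ω =>
          q * (if X n ω = 1 then (1 : ℝ) else 0) + p * (if X n ω = -1 then (1 : ℝ) else 0))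
    (S : ℕ → Ω → ℝ) (hS : ∀ n ω, S n ω = ∑ k ∈ Finset.Icc 1 n, X k ω)
    (τ : Ω → ℕ) (hτ : ∀ ω, τ ω = sInf {n : ℕ | 1 ≤ n ∧ X n ω = 0}) :
    (∀ᵐ ω ∂P, Tendsto (fun n : ℕ => S n ω) atTop (𝓝 (S (τ ω) ω))) ∧
    (∫ ω, S (τ ω) ω ∂P) = (p - q) / (1 - p + q) := by
  classical
  -- basic measurability facts
  have hpq0 : (0:ℝ) ≤ p + q := by linarith
  have hpq1 : p + q < 1 := by linarith
  have hφ : ∀ n : ℕ, Measurable (fun ω (k : Fin n) => X ((k : ℕ) + 1) ω) :=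
    fun n => measurable_pi_lambda _ fun k => hXmeas _
  have hσle : ∀ n, sigmaUpTo X n ≤ ‹MeasurableSpace Ω› := fun n => (hφ n).comap_le
  have hXσ : ∀ n k, 1 ≤ k → k ≤ n → Measurable[sigmaUpTo X n] (X k) := by
    intro n k hk1 hkn
    have hk : k - 1 < n := by omega
    have hXeq : X k
        = (fun v : Fin n → ℝ => v ⟨k - 1, hk⟩) ∘ (fun ω (j : Fin n) => X ((j : ℕ) + 1) ω) := by
      funext ω
      simp only [Function.comp_apply]
      congr 1
      omega
    rw [hXeq]
    exact (measurable_pi_apply _).comp (Measurable.of_comap_le le_rfl)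
  have hMev : ∀ (k : ℕ) (c : ℝ), MeasurableSet {ω | X k ω = c} :=
    fun k c => hXmeas k (measurableSet_singleton c)
  have hMσ : ∀ n k, 1 ≤ k → k ≤ n → ∀ c : ℝ, MeasurableSet[sigmaUpTo X n] {ω | X k ω = c} :=
    fun n k h1 h2 c => hXσ n k h1 h2 (measurableSet_singleton c)
  have hind : ∀ B : Set Ω, MeasurableSet B → Integrable (B.indicator fun _ => (1 : ℝ)) P :=
    fun B hB => (integrable_const (1 : ℝ)).indicator hB
  have hite : ∀ (k : ℕ) (c : ℝ) (ω : Ω),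
      (if X k ω = c then (1 : ℝ) else 0)
        = Set.indicator {ω' | X k ω' = c} (fun _ => (1 : ℝ)) ω := by
    intro k c ω
    by_cases h : X k ω = c <;> simp [Set.indicator_apply, Set.mem_setOf_eq, h]
  -- the key integral identity coming from the conditional expectation hypotheses
  have key : ∀ (n : ℕ), 1 ≤ n → ∀ (c α β : ℝ),
      (P[Set.indicator {ω | X (n + 1) ω = c} (fun _ => (1 : ℝ)) | sigmaUpTo X n]
        =ᵐ[P] fun ω =>
          α * (if X n ω = 1 then (1 : ℝ) else 0) + β * (if X n ω = -1 then (1 : ℝ) else 0)) →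
      ∀ A : Set Ω, MeasurableSet[sigmaUpTo X n] A →
      (P (A ∩ {ω | X (n + 1) ω = c})).toReal
        = α * (P (A ∩ {ω | X n ω = 1})).toReal + β * (P (A ∩ {ω | X n ω = -1})).toReal := by
    intro n hn c α β hcond A hA
    have h2 : ∫ ω in A,
          (P[Set.indicator {ω | X (n + 1) ω = c} (fun _ => (1 : ℝ)) | sigmaUpTo X n]) ω ∂P
        = ∫ ω in A, Set.indicator {ω | X (n + 1) ω = c} (fun _ => (1 : ℝ)) ω ∂P :=
      setIntegral_condExp (hσle n) (hind _ (hMev _ c)) hA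
    have h1 : ∫ ω in A, Set.indicator {ω | X (n + 1) ω = c} (fun _ => (1 : ℝ)) ω ∂P
        = (P (A ∩ {ω | X (n + 1) ω = c})).toReal := by
      rw [setIntegral_indicator (hMev _ c), setIntegral_const, smul_eq_mul, mul_one, measureReal_def]
    have h3 : ∫ ω in A,
          (P[Set.indicator {ω | X (n + 1) ω = c} (fun _ => (1 : ℝ)) | sigmaUpTo X n]) ω ∂P
        = ∫ ω in A, (α * (if X n ω = 1 then (1 : ℝ) else 0)
            + β * (if X n ω = -1 then (1 : ℝ) else 0)) ∂P :=
      integral_congr_ae (ae_restrict_of_ae hcond)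
    have h4 : ∫ ω in A, (α * (if X n ω = 1 then (1 : ℝ) else 0)
            + β * (if X n ω = -1 then (1 : ℝ) else 0)) ∂P
        = α * (P (A ∩ {ω | X n ω = 1})).toReal + β * (P (A ∩ {ω | X n ω = -1})).toReal := by
      simp only [hite]
      rw [integral_add (((hind _ (hMev n 1)).const_mul α).integrableOn)
          (((hind _ (hMev n (-1))).const_mul β).integrableOn),
        integral_const_mul, integral_const_mul,
        setIntegral_indicator (hMev n 1), setIntegral_indicator (hMev n (-1)),
        setIntegral_const, setIntegral_const, smul_eq_mul, smul_eq_mul, mul_one, mul_one,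
        measureReal_def, measureReal_def]
    rw [← h1, ← h2, h3, h4]
  have keyp : ∀ n, 1 ≤ n → ∀ A : Set Ω, MeasurableSet[sigmaUpTo X n] A →
      (P (A ∩ {ω | X (n + 1) ω = 1})).toReal
        = p * (P (A ∩ {ω | X n ω = 1})).toReal + q * (P (A ∩ {ω | X n ω = -1})).toReal :=
    fun n hn => key n hn 1 p q (hcondp n hn)
  have keyq : ∀ n, 1 ≤ n → ∀ A : Set Ω, MeasurableSet[sigmaUpTo X n] A →
      (P (A ∩ {ω | X (n + 1) ω = -1})).toReal
        = q * (P (A ∩ {ω | X n ω = 1})).toReal + p * (P (A ∩ {ω | X n ω = -1})).toReal :=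
    fun n hn => key n hn (-1) q p (hcondq n hn)
  have hzero : ∀ s : Set Ω, (P s).toReal = 0 → P s = 0 := by
    intro s h
    rcases (ENNReal.toReal_eq_zero_iff _).mp h with h' | h'
    · exact h'
    · exact absurd h' (measure_ne_top P s)
  -- absorption at 0
  have habs : ∀ n, 1 ≤ n → P ({ω | X n ω = 0} ∩ {ω | X (n + 1) ω ≠ 0}) = 0 := by
    intro n hn
    have hA := hMσ n n hn le_rfl 0
    have e1 : {ω | X n ω = 0} ∩ {ω | X n ω = 1} = ∅ := by
      ext ω
      simp only [Set.mem_inter_iff, Set.mem_setOf_eq, Set.mem_empty_iff_false, iff_false, not_and]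
      intro h0 h1
      rw [h0] at h1; norm_num at h1
    have e2 : {ω | X n ω = 0} ∩ {ω | X n ω = -1} = ∅ := by
      ext ω
      simp only [Set.mem_inter_iff, Set.mem_setOf_eq, Set.mem_empty_iff_false, iff_false, not_and]
      intro h0 h1
      rw [h0] at h1; norm_num at h1
    have g1 := keyp n hn _ hA
    have g2 := keyq n hn _ hA
    rw [e1, e2] at g1 g2
    simp only [measure_empty, ENNReal.toReal_zero, mul_zero, add_zero, zero_add] at g1 g2
    have n1 : P ({ω | X n ω = 0} ∩ {ω | X (n + 1) ω = 1}) = 0 := hzero _ g1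
    have n2 : P ({ω | X n ω = 0} ∩ {ω | X (n + 1) ω = -1}) = 0 := hzero _ g2
    refine measure_mono_null ?_ (measure_union_null n1 n2)
    rintro ω ⟨h0, hne⟩
    rcases hXval (n + 1) (by omega) ω with h | h | h
    · exact Or.inl ⟨h0, h⟩
    · exact Or.inr ⟨h0, h⟩
    · exact absurd h hne
  -- the survival sets
  set A : ℕ → Set Ω := fun n => {ω | ∀ k, 1 ≤ k → k ≤ n → X k ω ≠ 0} with hAdef
  have hAmem : ∀ n ω, ω ∈ A n ↔ ∀ k, 1 ≤ k → k ≤ n → X k ω ≠ 0 := fun n ω => Iff.rfl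
  have hAσ : ∀ n, MeasurableSet[sigmaUpTo X n] (A n) := by
    intro n
    have hrep : A n = ⋂ k : ℕ, {ω | 1 ≤ k → k ≤ n → X k ω ≠ 0} := by
      ext ω
      simp only [hAmem, Set.mem_iInter, Set.mem_setOf_eq]
    rw [hrep]
    refine MeasurableSet.iInter fun k => ?_
    by_cases hk1 : 1 ≤ k
    · by_cases hk2 : k ≤ n
      · have : {ω | 1 ≤ k → k ≤ n → X k ω ≠ 0} = ({ω | X k ω = 0})ᶜ := by
          ext ω; simp [hk1, hk2]
        rw [this]
        exact (hMσ n k hk1 hk2 0).compl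
      · have : {ω | 1 ≤ k → k ≤ n → X k ω ≠ 0} = Set.univ := by
          ext ω; simp [hk2]
        rw [this]
        exact MeasurableSet.univ
    · have : {ω | 1 ≤ k → k ≤ n → X k ω ≠ 0} = Set.univ := by
        ext ω; simp [hk1]
      rw [this]
      exact MeasurableSet.univ
  have hAm : ∀ n, MeasurableSet (A n) := fun n => hσle n _ (hAσ n)
  have hdisj0 : ∀ m : ℕ, Disjoint {ω | X m ω = 1} {ω | X m ω = -1} := by
    intro m
    rw [Set.disjoint_left]
    intro ω h1 h2
    rw [Set.mem_setOf_eq] at h1 h2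
    rw [h1] at h2; norm_num at h2
  have hApart : ∀ n, 1 ≤ n →
      A n = (A n ∩ {ω | X n ω = 1}) ∪ (A n ∩ {ω | X n ω = -1}) := by
    intro n hn
    ext ω
    simp only [Set.mem_union, Set.mem_inter_iff]
    constructor
    · intro h
      rcases hXval n hn ω with h1 | h1 | h1
      · exact Or.inl ⟨h, h1⟩
      · exact Or.inr ⟨h, h1⟩
      · exact absurd h1 ((hAmem n ω).mp h n hn le_rfl)
    · rintro (⟨h, _⟩ | ⟨h, _⟩) <;> exact h
  have hA1eq : ∀ n, 1 ≤ n →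
      A (n + 1) = (A n ∩ {ω | X (n + 1) ω = 1}) ∪ (A n ∩ {ω | X (n + 1) ω = -1}) := by
    intro n hn
    ext ω
    simp only [Set.mem_union, Set.mem_inter_iff, hAmem, Set.mem_setOf_eq]
    constructor
    · intro h
      have hmem : ∀ k, 1 ≤ k → k ≤ n → X k ω ≠ 0 := fun k hk1 hk2 => h k hk1 (by omega)
      rcases hXval (n + 1) (by omega) ω with h1 | h1 | h1
      · exact Or.inl ⟨hmem, h1⟩
      · exact Or.inr ⟨hmem, h1⟩
      · exact absurd h1 (h (n + 1) (by omega) le_rfl)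
    · rintro (⟨h1, h2⟩ | ⟨h1, h2⟩) <;> intro k hk1 hk2 <;>
        rcases Nat.lt_or_ge k (n + 1) with hk | hk
      · exact h1 k hk1 (by omega)
      · have hkk : k = n + 1 := by omega
        rw [hkk, h2]; norm_num
      · exact h1 k hk1 (by omega)
      · have hkk : k = n + 1 := by omega
        rw [hkk, h2]; norm_num
  have hstep : ∀ n, 1 ≤ n → (P (A (n + 1))).toReal = (p + q) * (P (A n)).toReal := by
    intro n hn
    have e1 := keyp n hn (A n) (hAσ n)
    have e2 := keyq n hn (A n) (hAσ n)
    have hu : (P (A (n + 1))).toReal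
        = (P (A n ∩ {ω | X (n + 1) ω = 1})).toReal
          + (P (A n ∩ {ω | X (n + 1) ω = -1})).toReal := by
      rw [hA1eq n hn,
        measure_union ((hdisj0 (n + 1)).mono Set.inter_subset_right Set.inter_subset_right)
          ((hAm n).inter (hMev (n + 1) (-1))),
        ENNReal.toReal_add (measure_ne_top _ _) (measure_ne_top _ _)]
    have hv : (P (A n)).toReal
        = (P (A n ∩ {ω | X n ω = 1})).toReal + (P (A n ∩ {ω | X n ω = -1})).toReal := by
      conv_lhs => rw [hApart n hn]
      rw [measure_union ((hdisj0 n).mono Set.inter_subset_right Set.inter_subset_right)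
          ((hAm n).inter (hMev n (-1))),
        ENNReal.toReal_add (measure_ne_top _ _) (measure_ne_top _ _)]
    rw [hu, e1, e2, hv]
    ring
  have hbase : (P (A 1)).toReal = p + q := by
    have hA1 : A 1 = {ω | X 1 ω = 1} ∪ {ω | X 1 ω = -1} := by
      ext ω
      simp only [Set.mem_union, hAmem, Set.mem_setOf_eq]
      constructor
      · intro h
        rcases hXval 1 le_rfl ω with h1 | h1 | h1
        · exact Or.inl h1
        · exact Or.inr h1
        · exact absurd h1 (h 1 le_rfl le_rfl)
      · rintro (h1 | h1) <;> intro k hk1 hk2 <;> have hkk : k = 1 := by omega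
        · rw [hkk, h1]; norm_num
        · rw [hkk, h1]; norm_num
    rw [hA1, measure_union (hdisj0 1) (hMev 1 (-1)), hX1p, hX1q,
      ENNReal.toReal_add ENNReal.ofReal_ne_top ENNReal.ofReal_ne_top,
      ENNReal.toReal_ofReal hp.le, ENNReal.toReal_ofReal hq.le]
  have hAval : ∀ n, 1 ≤ n → (P (A n)).toReal = (p + q) ^ n := by
    intro n hn
    induction n, hn using Nat.le_induction with
    | base => rw [hbase, pow_one]
    | succ n hn ih => rw [hstep n hn, ih, pow_succ]; ring
  have hAval' : ∀ n, P (A n) = ENNReal.ofReal ((p + q) ^ n) := by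
    intro n
    cases n with
    | zero =>
      have hA0 : A 0 = Set.univ := by
        ext ω
        simp only [hAmem, Set.mem_univ, iff_true]
        intro k hk1 hk2
        exact absurd (hk1.trans hk2) (by omega)
      rw [hA0, measure_univ, pow_zero, ENNReal.ofReal_one]
    | succ n =>
      rw [← ENNReal.ofReal_toReal (measure_ne_top P _), hAval (n + 1) (by omega)]
  -- τ is a.s. nonzero
  have hτ0sub : ∀ n, {ω | τ ω = 0} ⊆ A n := by
    intro n ω h
    rw [Set.mem_setOf_eq, hτ] at h
    have hem : {m : ℕ | 1 ≤ m ∧ X m ω = 0} = ∅ := by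
      rcases Nat.sInf_eq_zero.mp h with h' | h'
      · exact absurd h'.1 (by omega)
      · exact h'
    refine (hAmem n ω).mpr fun k hk1 hk2 hx => ?_
    exact Set.eq_empty_iff_forall_notMem.mp hem k ⟨hk1, hx⟩
  have hτ0null : P {ω | τ ω = 0} = 0 := by
    have hb : ∀ n : ℕ, P {ω | τ ω = 0} ≤ ENNReal.ofReal ((p + q) ^ n) :=
      fun n => (measure_mono (hτ0sub n)).trans_eq (hAval' n)
    have hlim : Tendsto (fun n : ℕ => ENNReal.ofReal ((p + q) ^ n)) atTop (𝓝 0) := by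
      rw [← ENNReal.ofReal_zero]
      exact (ENNReal.continuous_ofReal.tendsto 0).comp
        (tendsto_pow_atTop_nhds_zero_of_lt_one hpq0 hpq1)
    exact le_antisymm (ge_of_tendsto hlim (Eventually.of_forall hb)) zero_le
  -- the a.s. good event
  have hGood : ∀ᵐ ω ∂P, (∀ n, 1 ≤ n → X n ω = 0 → X (n + 1) ω = 0) ∧ τ ω ≠ 0 := by
    have h1 : ∀ᵐ ω ∂P, ∀ n, 1 ≤ n → X n ω = 0 → X (n + 1) ω = 0 := by
      rw [ae_all_iff]
      intro n
      by_cases hn : 1 ≤ n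
      · filter_upwards [measure_eq_zero_iff_ae_notMem.mp (habs n hn)] with ω hω
        intro _ h0
        by_contra hc
        exact hω ⟨h0, hc⟩
      · exact Eventually.of_forall fun ω h => absurd h hn
    have h2 : ∀ᵐ ω ∂P, τ ω ≠ 0 := by
      filter_upwards [measure_eq_zero_iff_ae_notMem.mp hτ0null] with ω h
      exact h
    exact h1.and h2
  -- a.s. convergence and domination
  have hMain : ∀ᵐ ω ∂P, Tendsto (fun n : ℕ => S n ω) atTop (𝓝 (S (τ ω) ω))
      ∧ ∀ n : ℕ, ‖S n ω‖ ≤ (τ ω : ℝ) := by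
    filter_upwards [hGood] with ω hω
    obtain ⟨habs', hτne⟩ := hω
    have hne : {m : ℕ | 1 ≤ m ∧ X m ω = 0}.Nonempty := by
      by_contra h
      rw [Set.not_nonempty_iff_eq_empty] at h
      exact hτne (by rw [hτ, h, Nat.sInf_empty])
    have hmem := Nat.sInf_mem hne
    rw [← hτ ω] at hmem
    obtain ⟨hτ1, hXτ⟩ := hmem
    have habsorb : ∀ m, τ ω ≤ m → X m ω = 0 := by
      intro m hm
      induction m, hm using Nat.le_induction with
      | base => exact hXτ
      | succ m hm ih => exact habs' m (le_trans hτ1 hm) ih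
    have hSconst : ∀ n, τ ω ≤ n → S n ω = S (τ ω) ω := by
      intro n hn
      rw [hS, hS]
      refine (Finset.sum_subset (Finset.Icc_subset_Icc_right hn) ?_).symm
      intro k hk hk'
      rw [Finset.mem_Icc] at hk
      rw [Finset.mem_Icc] at hk'
      exact habsorb k (by omega)
    have hboundm : ∀ m : ℕ, ‖S m ω‖ ≤ (m : ℝ) := by
      intro m
      rw [hS, Real.norm_eq_abs]
      calc |∑ k ∈ Finset.Icc 1 m, X k ω| ≤ ∑ k ∈ Finset.Icc 1 m, |X k ω| :=
            Finset.abs_sum_le_sum_abs _ _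
        _ ≤ ∑ _k ∈ Finset.Icc 1 m, (1 : ℝ) := by
            refine Finset.sum_le_sum fun k hk => ?_
            rcases hXval k (Finset.mem_Icc.mp hk).1 ω with h | h | h <;> rw [h] <;> norm_num
        _ = (m : ℝ) := by
            rw [Finset.sum_const, Nat.card_Icc, nsmul_eq_mul, mul_one]
            simp
    constructor
    · exact tendsto_atTop_of_eventually_const hSconst
    · intro n
      rcases le_total n (τ ω) with h | h
      · exact (hboundm n).trans (Nat.cast_le.mpr h)
      · rw [hSconst n h]; exact hboundm (τ ω)
  -- measurability of τ
  have hτmeas : Measurable τ := by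
    apply measurable_to_countable'
    intro n
    cases n with
    | zero =>
      have hrep : τ ⁻¹' {0} = ⋂ j : ℕ, ({ω | X (j + 1) ω = 0})ᶜ := by
        ext ω
        simp only [Set.mem_preimage, Set.mem_singleton_iff, Set.mem_iInter, Set.mem_compl_iff,
          Set.mem_setOf_eq]
        rw [hτ]
        constructor
        · intro h j hx
          rcases Nat.sInf_eq_zero.mp h with h' | h'
          · exact absurd h'.1 (by omega)
          · exact Set.eq_empty_iff_forall_notMem.mp h' (j + 1) ⟨by omega, hx⟩
        · intro h
          rw [Nat.sInf_eq_zero]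
          right
          ext m
          simp only [Set.mem_setOf_eq, Set.mem_empty_iff_false, iff_false, not_and]
          intro hm hx
          have hm' : m - 1 + 1 = m := by omega
          exact h (m - 1) (by rw [hm']; exact hx)
      rw [hrep]
      exact MeasurableSet.iInter fun j => (hMev (j + 1) 0).compl
    | succ m =>
      have hrep : τ ⁻¹' {m + 1}
          = {ω | X (m + 1) ω = 0} ∩ ⋂ k : ℕ, {ω | 1 ≤ k → k < m + 1 → X k ω ≠ 0} := by
        ext ω
        simp only [Set.mem_preimage, Set.mem_singleton_iff, Set.mem_inter_iff, Set.mem_iInter,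
          Set.mem_setOf_eq]
        rw [hτ]
        constructor
        · intro h
          have hne : {j : ℕ | 1 ≤ j ∧ X j ω = 0}.Nonempty := by
            by_contra hc
            rw [Set.not_nonempty_iff_eq_empty] at hc
            rw [hc, Nat.sInf_empty] at h
            omega
          have hmem := Nat.sInf_mem hne
          rw [h] at hmem
          refine ⟨hmem.2, ?_⟩
          intro k hk1 hk2 hx
          have hkmem : k ∈ {j : ℕ | 1 ≤ j ∧ X j ω = 0} := ⟨hk1, hx⟩
          have hle := Nat.sInf_le hkmem
          omega
        · rintro ⟨hx, hmin⟩
          have hne : {j : ℕ | 1 ≤ j ∧ X j ω = 0}.Nonempty := ⟨m + 1, by omega, hx⟩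
          have hmem := Nat.sInf_mem hne
          have hkmem : (m + 1) ∈ {j : ℕ | 1 ≤ j ∧ X j ω = 0} := ⟨by omega, hx⟩
          have hle := Nat.sInf_le hkmem
          by_contra hc
          have hlt : sInf {j : ℕ | 1 ≤ j ∧ X j ω = 0} < m + 1 := by omega
          exact hmin _ hmem.1 hlt hmem.2
      rw [hrep]
      refine (hMev (m + 1) 0).inter (MeasurableSet.iInter fun k => ?_)
      by_cases hk1 : 1 ≤ k
      · by_cases hk2 : k < m + 1
        · have : {ω | 1 ≤ k → k < m + 1 → X k ω ≠ 0} = ({ω | X k ω = 0})ᶜ := by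
            ext ω; simp [hk1, hk2]
          rw [this]
          exact (hMev k 0).compl
        · have : {ω | 1 ≤ k → k < m + 1 → X k ω ≠ 0} = Set.univ := by
            ext ω; simp [hk2]
          rw [this]
          exact MeasurableSet.univ
      · have : {ω | 1 ≤ k → k < m + 1 → X k ω ≠ 0} = Set.univ := by
          ext ω; simp [hk1]
        rw [this]
        exact MeasurableSet.univ
  -- integrability of τ
  have hτr : Measurable fun ω => (τ ω : ℝ) := measurable_from_top.comp hτmeas
  have hτsub : ∀ n : ℕ, {ω | n < τ ω} ⊆ A n := by
    intro n ω h
    rw [Set.mem_setOf_eq] at h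
    refine (hAmem n ω).mpr fun k hk1 hk2 hx => ?_
    have hle : τ ω ≤ k := by
      rw [hτ]
      exact Nat.sInf_le ⟨hk1, hx⟩
    omega
  have hfin : HasFiniteIntegral (fun ω => (τ ω : ℝ)) P := by
    have hnorm : ∀ ω, (‖(τ ω : ℝ)‖₊ : ℝ≥0∞) = (τ ω : ℝ≥0∞) := by
      intro ω
      simp
    have hpt : ∀ ω, (τ ω : ℝ≥0∞)
        = ∑' n : ℕ, Set.indicator {ω' | n < τ ω'} (fun _ => (1 : ℝ≥0∞)) ω := by
      intro ω
      calc (τ ω : ℝ≥0∞) = ∑ _n ∈ Finset.range (τ ω), (1 : ℝ≥0∞) := by simp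
        _ = ∑ n ∈ Finset.range (τ ω), Set.indicator {ω' | n < τ ω'} (fun _ => (1 : ℝ≥0∞)) ω := by
          refine Finset.sum_congr rfl fun i hi => ?_
          rw [Set.indicator_of_mem (show ω ∈ {ω' | i < τ ω'} from
            Finset.mem_range.mp hi)]
        _ = ∑' n : ℕ, Set.indicator {ω' | n < τ ω'} (fun _ => (1 : ℝ≥0∞)) ω := by
          refine (tsum_eq_sum fun i hi => ?_).symm
          rw [Set.indicator_of_notMem (show ω ∉ {ω' | i < τ ω'} from
            fun h => hi (Finset.mem_range.mpr h))]
    show (∫⁻ ω, (‖(τ ω : ℝ)‖₊ : ℝ≥0∞) ∂P) < ⊤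
    calc ∫⁻ ω, (‖(τ ω : ℝ)‖₊ : ℝ≥0∞) ∂P = ∫⁻ ω, (τ ω : ℝ≥0∞) ∂P := lintegral_congr hnorm
      _ = ∑' n : ℕ, P {ω | n < τ ω} := by
          rw [lintegral_congr hpt,
            lintegral_tsum fun n : ℕ => (measurable_const.indicator
              (show MeasurableSet {ω' | n < τ ω'} from hτmeas measurableSet_Ioi)).aemeasurable]
          exact tsum_congr fun n =>
            lintegral_indicator_one (show MeasurableSet {ω' | n < τ ω'} from
              hτmeas measurableSet_Ioi)
      _ ≤ ∑' n : ℕ, ENNReal.ofReal ((p + q) ^ n) :=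
          ENNReal.tsum_le_tsum fun n => by
            rw [← hAval' n]; exact measure_mono (hτsub n)
      _ < ⊤ := by
          rw [← ENNReal.ofReal_tsum_of_nonneg (fun n => pow_nonneg hpq0 n)
            (summable_geometric_of_lt_one hpq0 hpq1)]
          exact ENNReal.ofReal_lt_top
  have hτint : Integrable (fun ω => (τ ω : ℝ)) P := ⟨hτr.aestronglyMeasurable, hfin⟩
  -- integrability and expectation of the steps
  have hXint : ∀ k, 1 ≤ k → Integrable (X k) P := by
    intro k hk
    refine ⟨(hXmeas k).aestronglyMeasurable,
      HasFiniteIntegral.of_bounded (C := 1) (Eventually.of_forall fun ω => ?_)⟩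
    rcases hXval k hk ω with h | h | h <;> rw [h] <;> simp [Real.norm_eq_abs]
  have hSint : ∀ n, Integrable (S n) P := by
    intro n
    have hSn : S n = fun ω => ∑ k ∈ Finset.Icc 1 n, X k ω := funext (hS n)
    rw [hSn]
    exact integrable_finset_sum _ fun k hk => hXint k (Finset.mem_Icc.mp hk).1
  have hEX : ∀ k, 1 ≤ k → ∫ ω, X k ω ∂P
      = (P {ω | X k ω = 1}).toReal - (P {ω | X k ω = -1}).toReal := by
    intro k hk
    have hptw : ∀ ω, X k ω
        = Set.indicator {ω' | X k ω' = 1} (fun _ => (1 : ℝ)) ω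
          - Set.indicator {ω' | X k ω' = -1} (fun _ => (1 : ℝ)) ω := by
      intro ω
      rcases hXval k hk ω with h | h | h <;>
        simp [Set.indicator_apply, Set.mem_setOf_eq, h] <;> norm_num
    rw [integral_congr_ae (Eventually.of_forall hptw),
      integral_sub (hind _ (hMev k 1)) (hind _ (hMev k (-1))),
      integral_indicator_const (1 : ℝ) (hMev k 1),
      integral_indicator_const (1 : ℝ) (hMev k (-1)), smul_eq_mul, smul_eq_mul,
      mul_one, mul_one, measureReal_def, measureReal_def]
  have hDrec : ∀ k, 1 ≤ k →
      (P {ω | X (k + 1) ω = 1}).toReal - (P {ω | X (k + 1) ω = -1}).toReal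
        = (p - q) * ((P {ω | X k ω = 1}).toReal - (P {ω | X k ω = -1}).toReal) := by
    intro k hk
    have h1 := keyp k hk Set.univ MeasurableSet.univ
    have h2 := keyq k hk Set.univ MeasurableSet.univ
    rw [Set.univ_inter, Set.univ_inter, Set.univ_inter] at h1 h2
    rw [h1, h2]
    ring
  have hDval : ∀ k, 1 ≤ k →
      (P {ω | X k ω = 1}).toReal - (P {ω | X k ω = -1}).toReal = (p - q) ^ k := by
    intro k hk
    induction k, hk using Nat.le_induction with
    | base =>
      rw [hX1p, hX1q, ENNReal.toReal_ofReal hp.le, ENNReal.toReal_ofReal hq.le, pow_one]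
    | succ k hk ih => rw [hDrec k hk, ih, pow_succ]; ring
  have hESn : ∀ n, ∫ ω, S n ω ∂P = ∑ k ∈ Finset.Icc 1 n, (p - q) ^ k := by
    intro n
    rw [integral_congr_ae (Eventually.of_forall (hS n)),
      integral_finset_sum _ fun k hk => hXint k (Finset.mem_Icc.mp hk).1]
    exact Finset.sum_congr rfl fun k hk => by
      rw [hEX k (Finset.mem_Icc.mp hk).1, hDval k (Finset.mem_Icc.mp hk).1]
  -- dominated convergence
  have hTend : ∀ᵐ ω ∂P, Tendsto (fun n : ℕ => S n ω) atTop (𝓝 (S (τ ω) ω)) :=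
    hMain.mono fun ω h => h.1
  have hBound : ∀ n : ℕ, ∀ᵐ ω ∂P, ‖S n ω‖ ≤ (τ ω : ℝ) :=
    fun n => hMain.mono fun ω h => h.2 n
  have hDCT : Tendsto (fun n => ∫ ω, S n ω ∂P) atTop (𝓝 (∫ ω, S (τ ω) ω ∂P)) :=
    tendsto_integral_of_dominated_convergence _
      (fun n => (hSint n).aestronglyMeasurable) hτint hBound hTend
  -- geometric series limit
  have hxabs : |p - q| < 1 := by
    rw [abs_lt]; constructor <;> linarith
  have hxpos : (0 : ℝ) < 1 - (p - q) := by linarith [abs_lt.mp hxabs]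
  have hsum : HasSum (fun n : ℕ => (p - q) ^ n) (1 - (p - q))⁻¹ :=
    hasSum_geometric_of_norm_lt_one (by rwa [Real.norm_eq_abs])
  have hpart : Tendsto (fun n : ℕ => ∑ k ∈ Finset.range n, (p - q) ^ k) atTop
      (𝓝 (1 - (p - q))⁻¹) := hsum.tendsto_sum_nat
  have hIcc : ∀ n : ℕ, ∑ k ∈ Finset.Icc 1 n, (p - q) ^ k
      = (∑ k ∈ Finset.range (n + 1), (p - q) ^ k) - 1 := by
    intro n
    rw [Finset.sum_range_succ', pow_zero]
    have hre : ∑ k ∈ Finset.Icc 1 n, (p - q) ^ k = ∑ i ∈ Finset.range n, (p - q) ^ (i + 1) := by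
      rw [← Finset.Ico_add_one_right_eq_Icc, Finset.sum_Ico_eq_sum_range]
      exact Finset.sum_congr rfl fun i _ => by rw [add_comm 1 i]
    rw [hre]
    ring
  have hgeo : Tendsto (fun n : ℕ => ∑ k ∈ Finset.Icc 1 n, (p - q) ^ k) atTop
      (𝓝 ((1 - (p - q))⁻¹ - 1)) := by
    have h := Tendsto.sub (hpart.comp (tendsto_add_atTop_nat 1))
      (tendsto_const_nhds (x := (1 : ℝ)))
    exact h.congr fun n => (hIcc n).symm
  have hlim2 : Tendsto (fun n => ∫ ω, S n ω ∂P) atTop (𝓝 ((1 - (p - q))⁻¹ - 1)) := by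
    have hfe : (fun n => ∫ ω, S n ω ∂P) = fun n => ∑ k ∈ Finset.Icc 1 n, (p - q) ^ k :=
      funext hESn
    rw [hfe]
    exact hgeo
  have hval : ∫ ω, S (τ ω) ω ∂P = (1 - (p - q))⁻¹ - 1 := tendsto_nhds_unique hDCT hlim2
  refine ⟨hTend, ?_⟩
  rw [hval]
  have h1x : (1 : ℝ) - p + q ≠ 0 := by linarith
  have h2x : (1 : ℝ) - (p - q) = 1 - p + q := by ring
  rw [h2x, eq_div_iff h1x, sub_mul, inv_mul_cancel₀ h1x]
  ring
end
end

section
/- S_n / n converges in distribution, as n → ∞, to the three-point law p·δ_{(p−q)/(2+q−p)} + r·δ_0 + q·δ_{−(p−q)/(2+q−p)} (i.e. the limit S takes the value (p−q)/(2+q−p) with probability p, the value 0 with probability r, and the value −(p−q)/(2+q−p) with probability q). Moreover, for every real r' > 0, E((S_n/n)^{r'}) → E(S^{r'}) as n → ∞; in particular E(S_n/n) → (p−q)²/(2+q−p) and Var(S_n/n) → ((p−q)²/(2+q−p)²)·(p + q − (p−q)²). -/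
open MeasureTheory ProbabilityTheory Filter Real
open scoped ENNReal NNReal Topology Classical

noncomputable section

section ERWDAux

set_option linter.unusedSectionVars false
set_option linter.unusedVariables false

lemma aux_geo_right (j : ℕ) : ∀ n, ∑ k ∈ Finset.Ioc j n, (2⁻¹:ℝ) ^ (k - j) ≤ 2 := by
  have key : ∀ n, j ≤ n → ∑ k ∈ Finset.Ioc j n, (2⁻¹:ℝ) ^ (k - j) = 1 - (2⁻¹:ℝ) ^ (n - j) := by
    intro n hn
    induction n, hn using Nat.le_induction with
    | base => simp
    | succ n hn ih =>
      rw [Finset.sum_Ioc_succ_top (by omega), ih]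
      have h1 : n + 1 - j = (n - j) + 1 := by omega
      rw [h1]
      ring
  intro n
  rcases le_or_gt j n with h | h
  · rw [key n h]
    have : (0:ℝ) ≤ (2⁻¹:ℝ) ^ (n - j) := by positivity
    linarith
  · rw [Finset.Ioc_eq_empty (by omega)]
    simp

lemma aux_geo_left : ∀ j : ℕ, ∑ k ∈ Finset.Ioc 0 j, (2⁻¹:ℝ) ^ (j - k) ≤ 2 := by
  intro j
  induction j with
  | zero => simp
  | succ j ih =>
    rw [Finset.sum_Ioc_succ_top (by omega)]
    have h1 : ∑ k ∈ Finset.Ioc 0 j, (2⁻¹:ℝ) ^ (j + 1 - k) ≤ 1 := by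
      have : ∀ k ∈ Finset.Ioc 0 j, (2⁻¹:ℝ) ^ (j + 1 - k) = 2⁻¹ * (2⁻¹:ℝ) ^ (j - k) := by
        intro k hk
        simp only [Finset.mem_Ioc] at hk
        rw [show j + 1 - k = (j - k) + 1 by omega]
        ring
      rw [Finset.sum_congr rfl this, ← Finset.mul_sum]
      nlinarith
    simp only [Nat.sub_self, pow_zero]
    linarith


variable {Ω : Type*} [MeasurableSpace Ω] (P : Measure Ω) [IsProbabilityMeasure P]

lemma sigmaUpTo_le (X : ℕ → Ω → ℝ) (hXmeas : ∀ n, Measurable (X n)) (n : ℕ) :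
    sigmaUpTo X n ≤ ‹MeasurableSpace Ω› :=
  (measurable_pi_lambda _ fun k => hXmeas _).comap_le

lemma measurable_sigmaUpTo (X : ℕ → Ω → ℝ) (m n : ℕ) (hm : 1 ≤ m) (hmn : m ≤ n) :
    Measurable[sigmaUpTo X n] (X m) := by
  have h : X m = (fun v : Fin n → ℝ => v ⟨m - 1, by omega⟩) ∘
      (fun ω (k : Fin n) => X ((k : ℕ) + 1) ω) := by
    funext ω
    simp only [Function.comp_apply]
    congr 1
    omega
  rw [h]
  exact (measurable_pi_apply _).comp (Measurable.of_comap_le le_rfl)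

lemma indicator_eq_if {A : Set Ω} {ω : Ω} :
    Set.indicator A (fun _ => (1:ℝ)) ω = if ω ∈ A then (1:ℝ) else 0 := by
  simp [Set.indicator_apply]

lemma integrable_ind (X : ℕ → Ω → ℝ) (hXmeas : ∀ n, Measurable (X n)) (n : ℕ) (c : ℝ) :
    Integrable (Set.indicator {ω | X n ω = c} (fun _ => (1:ℝ))) P := by
  refine (integrable_const (1:ℝ)).indicator ?_
  exact (hXmeas n) (measurableSet_singleton c)

lemma condexp_X_succ (X : ℕ → Ω → ℝ) (hXmeas : ∀ n, Measurable (X n))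
    (hXval : ∀ n, 1 ≤ n → ∀ ω, X n ω = 1 ∨ X n ω = -1 ∨ X n ω = 0)
    (p q : ℝ) (n : ℕ) (hn : 2 ≤ n)
    (hcondp : P[Set.indicator {ω | X (n + 1) ω = 1} (fun _ => (1 : ℝ)) | sigmaUpTo X n]
        =ᵐ[P] fun ω =>
          (p * ((if X 1 ω = 1 then (1 : ℝ) else 0) + (if X n ω = 1 then (1 : ℝ) else 0))
            + q * ((if X 1 ω = -1 then (1 : ℝ) else 0)
              + (if X n ω = -1 then (1 : ℝ) else 0))) / 2)
    (hcondq : P[Set.indicator {ω | X (n + 1) ω = -1} (fun _ => (1 : ℝ)) | sigmaUpTo X n]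
        =ᵐ[P] fun ω =>
          (q * ((if X 1 ω = 1 then (1 : ℝ) else 0) + (if X n ω = 1 then (1 : ℝ) else 0))
            + p * ((if X 1 ω = -1 then (1 : ℝ) else 0)
              + (if X n ω = -1 then (1 : ℝ) else 0))) / 2) :
    P[X (n+1) | sigmaUpTo X n] =ᵐ[P] fun ω => (p - q) / 2 * (X 1 ω + X n ω) := by
  have hid : ∀ m, 1 ≤ m → ∀ ω,
      (if X m ω = 1 then (1:ℝ) else 0) - (if X m ω = -1 then (1:ℝ) else 0) = X m ω := by
    intro m hm ω
    rcases hXval m hm ω with h | h | h <;> rw [h] <;> norm_num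
  have hdecomp : X (n+1) =
      Set.indicator {ω | X (n+1) ω = 1} (fun _ => (1:ℝ))
        - Set.indicator {ω | X (n+1) ω = -1} (fun _ => (1:ℝ)) := by
    funext ω
    rw [Pi.sub_apply, indicator_eq_if, indicator_eq_if]
    simp only [Set.mem_setOf_eq]
    exact (hid (n+1) (by omega) ω).symm
  have hsub := condExp_sub (m := sigmaUpTo X n) (μ := P)
    (integrable_ind P X hXmeas (n+1) 1) (integrable_ind P X hXmeas (n+1) (-1))
  rw [← hdecomp] at hsub
  refine hsub.trans ?_
  filter_upwards [hcondp, hcondq] with ω h1 h2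
  simp only [Pi.sub_apply]
  rw [h1, h2]
  rcases hXval 1 (by omega) ω with h | h | h <;>
    rcases hXval n (by omega) ω with g | g | g <;>
      simp only [h, g] <;> norm_num <;> ring

lemma integrable_bdd {f : Ω → ℝ} (hf : Measurable f) (C : ℝ) (h : ∀ ω, |f ω| ≤ C) :
    Integrable f P :=
  (integrable_const C).mono' hf.aestronglyMeasurable
    (ae_of_all _ fun ω => by simpa [Real.norm_eq_abs] using h ω)

lemma key_prod (X : ℕ → Ω → ℝ) (hXmeas : ∀ n, Measurable (X n)) (k : ℕ)
    {Z f : Ω → ℝ} (hZ : Measurable[sigmaUpTo X k] Z) (hZb : ∀ ω, |Z ω| ≤ 2)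
    (hf : Measurable f) (hfb : ∀ ω, |f ω| ≤ 1) :
    ∫ ω, Z ω * f ω ∂P = ∫ ω, Z ω * (P[f | sigmaUpTo X k]) ω ∂P := by
  have hm := sigmaUpTo_le X hXmeas k
  have hZm : Measurable Z := hZ.mono hm le_rfl
  have hfint : Integrable f P := integrable_bdd P hf 1 hfb
  have hZfint : Integrable (Z * f) P := by
    refine integrable_bdd P (hZm.mul hf) 2 fun ω => ?_
    calc |Z ω * f ω| = |Z ω| * |f ω| := abs_mul _ _
      _ ≤ 2 * 1 := mul_le_mul (hZb ω) (hfb ω) (abs_nonneg _) (by norm_num)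
      _ = 2 := by norm_num
  have h := condExp_mul_of_stronglyMeasurable_left (μ := P) hZ.stronglyMeasurable hZfint hfint
  calc ∫ ω, Z ω * f ω ∂P = ∫ ω, (Z * f) ω ∂P := rfl
    _ = ∫ ω, (P[Z * f | sigmaUpTo X k]) ω ∂P := (integral_condExp hm).symm
    _ = ∫ ω, (Z * P[f | sigmaUpTo X k]) ω ∂P := integral_congr_ae h
    _ = ∫ ω, Z ω * (P[f | sigmaUpTo X k]) ω ∂P := rfl

lemma erwd_R_rec (X : ℕ → Ω → ℝ) (hXmeas : ∀ n, Measurable (X n))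
    (hXval : ∀ n, 1 ≤ n → ∀ ω, X n ω = 1 ∨ X n ω = -1 ∨ X n ω = 0)
    (a α : ℝ) (hαa : α * (1 + a) = a) (habs_a : |a| ≤ 1)
    (hcond' : ∀ n, 2 ≤ n →
      P[X (n+1) | sigmaUpTo X n] =ᵐ[P] fun ω => α * (X 1 ω + X n ω))
    (j k : ℕ) (hj : 1 ≤ j) (hjk : j ≤ k) (hk : 2 ≤ k) :
    ∫ ω, (X j ω - a * X 1 ω) * (X (k+1) ω - a * X 1 ω) ∂P
      = α * ∫ ω, (X j ω - a * X 1 ω) * (X k ω - a * X 1 ω) ∂P := by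
  have hXb : ∀ m, 1 ≤ m → ∀ ω, |X m ω| ≤ 1 := by
    intro m hm ω
    rcases hXval m hm ω with h | h | h <;> rw [h] <;> norm_num
  set Z : Ω → ℝ := fun ω => X j ω - a * X 1 ω with hZdef
  have hZmeas : Measurable Z := (hXmeas j).sub ((hXmeas 1).const_mul a)
  have hZb : ∀ ω, |Z ω| ≤ 2 := by
    intro ω
    have h1 := hXb j hj ω
    have h2 := hXb 1 (le_refl 1) ω
    have : |a * X 1 ω| ≤ 1 := by
      rw [abs_mul]
      calc |a| * |X 1 ω| ≤ 1 * 1 := mul_le_mul habs_a h2 (abs_nonneg _) zero_le_one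
        _ = 1 := one_mul 1
    calc |Z ω| ≤ |X j ω| + |a * X 1 ω| := abs_sub _ _
      _ ≤ 2 := by linarith
  have hZmF : Measurable[sigmaUpTo X k] Z :=
    (measurable_sigmaUpTo X j k hj hjk).sub
      ((measurable_sigmaUpTo X 1 k (le_refl 1) (le_trans hj hjk)).const_mul a)
  -- integrability of products
  have hIZX : ∀ m, 1 ≤ m → Integrable (fun ω => Z ω * X m ω) P := by
    intro m hm
    refine integrable_bdd P (hZmeas.mul (hXmeas m)) 2 fun ω => ?_
    rw [abs_mul]
    calc |Z ω| * |X m ω| ≤ 2 * 1 :=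
        mul_le_mul (hZb ω) (hXb m hm ω) (abs_nonneg _) (by norm_num)
      _ = 2 := by norm_num
  -- step 1 : expand the product with X (k+1)
  have e1 : ∫ ω, Z ω * (X (k+1) ω - a * X 1 ω) ∂P
      = (∫ ω, Z ω * X (k+1) ω ∂P) - a * ∫ ω, Z ω * X 1 ω ∂P := by
    have : (fun ω => Z ω * (X (k+1) ω - a * X 1 ω))
        = fun ω => Z ω * X (k+1) ω - a * (Z ω * X 1 ω) := by funext ω; ring
    rw [this, integral_sub (hIZX (k+1) (by omega)) ((hIZX 1 (le_refl 1)).const_mul a),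
      integral_const_mul]
  -- step 2 : the conditional expectation step
  have e2 : ∫ ω, Z ω * X (k+1) ω ∂P
      = α * (∫ ω, Z ω * X 1 ω ∂P) + α * ∫ ω, Z ω * X k ω ∂P := by
    rw [key_prod P X hXmeas k hZmF hZb (hXmeas (k+1)) (hXb (k+1) (by omega))]
    have : ∫ ω, Z ω * (P[X (k+1) | sigmaUpTo X k]) ω ∂P
        = ∫ ω, Z ω * (α * (X 1 ω + X k ω)) ∂P := by
      refine integral_congr_ae ?_
      filter_upwards [hcond' k hk] with ω hω
      rw [hω]
    rw [this]
    have : (fun ω => Z ω * (α * (X 1 ω + X k ω)))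
        = fun ω => α * (Z ω * X 1 ω) + α * (Z ω * X k ω) := by funext ω; ring
    rw [this, integral_add ((hIZX 1 (le_refl 1)).const_mul α)
      ((hIZX k (by omega)).const_mul α), integral_const_mul, integral_const_mul]
  -- step 3 : express Z * X k in terms of Z * Y k
  have e3 : ∫ ω, Z ω * X k ω ∂P
      = (∫ ω, Z ω * (X k ω - a * X 1 ω) ∂P) + a * ∫ ω, Z ω * X 1 ω ∂P := by
    have : (fun ω => Z ω * (X k ω - a * X 1 ω))
        = fun ω => Z ω * X k ω - a * (Z ω * X 1 ω) := by funext ω; ring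
    rw [this, integral_sub (hIZX k (by omega)) ((hIZX 1 (le_refl 1)).const_mul a),
      integral_const_mul]
    ring
  rw [e1, e2, e3]
  have h0 : α + α * a - a = 0 := by linarith [hαa]
  linear_combination (∫ ω, Z ω * X 1 ω ∂P) * h0

lemma erwd_L2 (X : ℕ → Ω → ℝ) (hXmeas : ∀ n, Measurable (X n))
    (hXval : ∀ n, 1 ≤ n → ∀ ω, X n ω = 1 ∨ X n ω = -1 ∨ X n ω = 0)
    (a α : ℝ) (hαa : α * (1 + a) = a) (habs_a : |a| ≤ 1) (hα2 : |α| ≤ 2⁻¹)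
    (hcond' : ∀ n, 2 ≤ n →
      P[X (n+1) | sigmaUpTo X n] =ᵐ[P] fun ω => α * (X 1 ω + X n ω))
    (S : ℕ → Ω → ℝ) (hS : ∀ n ω, S n ω = ∑ k ∈ Finset.Icc 1 n, X k ω)
    (n : ℕ) (hn : 1 ≤ n) :
    ∫ ω, (S n ω / n - a * X 1 ω)^2 ∂P ≤ 32 / n := by
  have hXb : ∀ m, 1 ≤ m → ∀ ω, |X m ω| ≤ 1 := by
    intro m hm ω
    rcases hXval m hm ω with h | h | h <;> rw [h] <;> norm_num
  set Y : ℕ → Ω → ℝ := fun k ω => X k ω - a * X 1 ω with hYdef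
  have hYmeas : ∀ k, Measurable (Y k) := fun k => (hXmeas k).sub ((hXmeas 1).const_mul a)
  have hYb : ∀ k, 1 ≤ k → ∀ ω, |Y k ω| ≤ 2 := by
    intro k hk ω
    have h1 := hXb k hk ω
    have h2 := hXb 1 (le_refl 1) ω
    have h3 : |a * X 1 ω| ≤ 1 := by
      rw [abs_mul]
      calc |a| * |X 1 ω| ≤ 1 * 1 := mul_le_mul habs_a h2 (abs_nonneg _) zero_le_one
        _ = 1 := one_mul 1
    calc |Y k ω| ≤ |X k ω| + |a * X 1 ω| := abs_sub _ _
      _ ≤ 2 := by linarith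
  have hYint : ∀ j k, 1 ≤ j → 1 ≤ k → Integrable (fun ω => Y j ω * Y k ω) P := by
    intro j k hj hk
    refine integrable_bdd P ((hYmeas j).mul (hYmeas k)) 4 fun ω => ?_
    rw [abs_mul]
    calc |Y j ω| * |Y k ω| ≤ 2 * 2 :=
        mul_le_mul (hYb j hj ω) (hYb k hk ω) (abs_nonneg _) (by norm_num)
      _ = 4 := by norm_num
  set R : ℕ → ℕ → ℝ := fun j k => ∫ ω, Y j ω * Y k ω ∂P with hRdef
  have hRb : ∀ j k, 1 ≤ j → 1 ≤ k → |R j k| ≤ 4 := by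
    intro j k hj hk
    have := norm_integral_le_of_norm_le_const (μ := P)
      (f := fun ω => Y j ω * Y k ω) (C := 4) (ae_of_all _ fun ω => by
        rw [Real.norm_eq_abs, abs_mul]
        calc |Y j ω| * |Y k ω| ≤ 2 * 2 :=
            mul_le_mul (hYb j hj ω) (hYb k hk ω) (abs_nonneg _) (by norm_num)
          _ = 4 := by norm_num)
    simpa [Real.norm_eq_abs] using this
  have hRsym : ∀ j k, R j k = R k j := by
    intro j k
    simp only [hRdef]
    exact integral_congr_ae (ae_of_all _ fun ω => mul_comm _ _)
  have hRrec : ∀ j k, 1 ≤ j → j ≤ k → 2 ≤ k → R j (k+1) = α * R j k :=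
    fun j k hj hjk hk => erwd_R_rec P X hXmeas hXval a α hαa habs_a hcond' j k hj hjk hk
  have hRbound : ∀ j, 1 ≤ j → ∀ k, j ≤ k → |R j k| ≤ 8 * (2⁻¹:ℝ) ^ (k - j) := by
    intro j hj k hk
    induction k, hk using Nat.le_induction with
    | base =>
      simpa using (hRb j j hj hj).trans (by norm_num)
    | succ k hk ih =>
      rcases le_or_gt 2 k with h2 | h2
      · rw [hRrec j k hj hk h2]
        rw [abs_mul]
        calc |α| * |R j k| ≤ 2⁻¹ * (8 * (2⁻¹:ℝ) ^ (k - j)) :=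
            mul_le_mul hα2 ih (abs_nonneg _) (by norm_num)
          _ = 8 * (2⁻¹:ℝ) ^ (k + 1 - j) := by
            rw [show k + 1 - j = (k - j) + 1 by omega]; ring
      · -- k = 1, j = 1, k+1 = 2 : k+1-j = 1
        have hk1 : k = 1 := by omega
        have hj1 : j = 1 := by omega
        subst hk1; subst hj1
        simpa using (hRb 1 2 (le_refl 1) (by norm_num)).trans (by norm_num)
  -- now the sum bound
  have hnR : (0:ℝ) < n := by exact_mod_cast hn
  have hD : ∀ ω, S n ω / n - a * X 1 ω = (∑ k ∈ Finset.Icc 1 n, Y k ω) / n := by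
    intro ω
    simp only [hYdef]
    rw [hS, Finset.sum_sub_distrib, Finset.sum_const, Nat.card_Icc,
      show n + 1 - 1 = n from by omega]
    simp only [nsmul_eq_mul]
    field_simp
  have hIqq : ∫ ω, (S n ω / n - a * X 1 ω)^2 ∂P
      = (∑ j ∈ Finset.Icc 1 n, ∑ k ∈ Finset.Icc 1 n, R j k) / (n:ℝ)^2 := by
    have h1 : ∀ ω, (S n ω / n - a * X 1 ω)^2
        = (∑ j ∈ Finset.Icc 1 n, ∑ k ∈ Finset.Icc 1 n, Y j ω * Y k ω) * ((n:ℝ)^2)⁻¹ := by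
      intro ω
      rw [hD ω, div_pow, sq]
      rw [Finset.sum_mul_sum]
      rw [div_eq_mul_inv]
    simp_rw [h1]
    rw [integral_mul_const]
    rw [integral_finset_sum _ (fun j hj => integrable_finset_sum _
      (fun k hk => hYint j k (Finset.mem_Icc.mp hj).1 (Finset.mem_Icc.mp hk).1))]
    have : ∀ j ∈ Finset.Icc 1 n, ∫ ω, ∑ k ∈ Finset.Icc 1 n, Y j ω * Y k ω ∂P
        = ∑ k ∈ Finset.Icc 1 n, R j k := by
      intro j hj
      rw [integral_finset_sum _ (fun k hk => hYint j k (Finset.mem_Icc.mp hj).1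
        (Finset.mem_Icc.mp hk).1)]
    rw [Finset.sum_congr rfl this, div_eq_mul_inv]
  rw [hIqq]
  have hsum : |∑ j ∈ Finset.Icc 1 n, ∑ k ∈ Finset.Icc 1 n, R j k| ≤ 32 * n := by
    calc |∑ j ∈ Finset.Icc 1 n, ∑ k ∈ Finset.Icc 1 n, R j k|
        ≤ ∑ j ∈ Finset.Icc 1 n, |∑ k ∈ Finset.Icc 1 n, R j k| := Finset.abs_sum_le_sum_abs _ _
      _ ≤ ∑ j ∈ Finset.Icc 1 n, (32:ℝ) := by
        refine Finset.sum_le_sum fun j hj => ?_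
        obtain ⟨hj1, hjn⟩ := Finset.mem_Icc.mp hj
        calc |∑ k ∈ Finset.Icc 1 n, R j k| ≤ ∑ k ∈ Finset.Icc 1 n, |R j k| :=
            Finset.abs_sum_le_sum_abs _ _
          _ ≤ 32 := by
            rw [show Finset.Icc 1 n = Finset.Ioc 0 n from rfl]
            rw [← Finset.sum_Ioc_consecutive _ (Nat.zero_le j) hjn]
            have hL : ∑ k ∈ Finset.Ioc 0 j, |R j k| ≤ 16 := by
              calc ∑ k ∈ Finset.Ioc 0 j, |R j k|
                  ≤ ∑ k ∈ Finset.Ioc 0 j, 8 * (2⁻¹:ℝ) ^ (j - k) := by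
                    refine Finset.sum_le_sum fun k hk => ?_
                    obtain ⟨hk1, hkj⟩ := Finset.mem_Ioc.mp hk
                    rw [hRsym j k]
                    exact hRbound k hk1 j hkj
                _ = 8 * ∑ k ∈ Finset.Ioc 0 j, (2⁻¹:ℝ) ^ (j - k) := by
                    rw [Finset.mul_sum]
                _ ≤ 8 * 2 := by
                    have := aux_geo_left j
                    linarith
                _ = 16 := by norm_num
            have hR2 : ∑ k ∈ Finset.Ioc j n, |R j k| ≤ 16 := by
              calc ∑ k ∈ Finset.Ioc j n, |R j k|
                  ≤ ∑ k ∈ Finset.Ioc j n, 8 * (2⁻¹:ℝ) ^ (k - j) := by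
                    refine Finset.sum_le_sum fun k hk => ?_
                    obtain ⟨hjk, hkn⟩ := Finset.mem_Ioc.mp hk
                    exact hRbound j hj1 k (le_of_lt hjk)
                _ = 8 * ∑ k ∈ Finset.Ioc j n, (2⁻¹:ℝ) ^ (k - j) := by
                    rw [Finset.mul_sum]
                _ ≤ 8 * 2 := by
                    have := aux_geo_right j n
                    linarith
                _ = 16 := by norm_num
            linarith
      _ = 32 * n := by
        rw [Finset.sum_const, Nat.card_Icc]
        simp only [nsmul_eq_mul]
        rw [show n + 1 - 1 = n from by omega]
        ring
  have habs := abs_le.mp hsum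
  rw [div_le_div_iff₀ (by positivity) hnR]
  nlinarith [habs.2, sq_nonneg ((n:ℝ))]

lemma integral_if_eq (X : ℕ → Ω → ℝ) (hXmeas : ∀ n, Measurable (X n)) (c : ℝ) {v : ℝ}
    (hv : 0 ≤ v) (hP : P {ω | X 1 ω = c} = ENNReal.ofReal v) :
    ∫ ω, (if X 1 ω = c then (1:ℝ) else 0) ∂P = v := by
  have h1 : (fun ω => if X 1 ω = c then (1:ℝ) else 0)
      = Set.indicator {ω | X 1 ω = c} (fun _ => (1:ℝ)) := by
    funext ω
    rw [indicator_eq_if]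
    rfl
  rw [h1, integral_indicator_const (1:ℝ)
      (show MeasurableSet {ω | X 1 ω = c} from (hXmeas 1) (measurableSet_singleton c)), measureReal_def, hP,
    ENNReal.toReal_ofReal hv, smul_eq_mul, mul_one]

lemma integral_comp_aX1 (X : ℕ → Ω → ℝ) (hXmeas : ∀ n, Measurable (X n))
    (hXval : ∀ n, 1 ≤ n → ∀ ω, X n ω = 1 ∨ X n ω = -1 ∨ X n ω = 0)
    (p q r : ℝ) (hp : 0 ≤ p) (hq : 0 ≤ q) (hr : 0 ≤ r)
    (hX1p : P {ω | X 1 ω = 1} = ENNReal.ofReal p)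
    (hX1q : P {ω | X 1 ω = -1} = ENNReal.ofReal q)
    (hX1r : P {ω | X 1 ω = 0} = ENNReal.ofReal r)
    (a : ℝ) (g : ℝ → ℝ) :
    ∫ ω, g (a * X 1 ω) ∂P = p * g a + q * g (-a) + r * g 0 := by
  have h1 : (fun ω => g (a * X 1 ω)) = fun ω =>
      g a * (if X 1 ω = 1 then (1:ℝ) else 0) + g (-a) * (if X 1 ω = -1 then (1:ℝ) else 0)
        + g 0 * (if X 1 ω = 0 then (1:ℝ) else 0) := by
    funext ω
    rcases hXval 1 (le_refl 1) ω with h | h | h <;> rw [h] <;> norm_num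
  have hint : ∀ c : ℝ, Integrable (fun ω => if X 1 ω = c then (1:ℝ) else 0) P := by
    intro c
    refine integrable_bdd P (Measurable.ite ((hXmeas 1) (measurableSet_singleton c))
      measurable_const measurable_const) 1 fun ω => ?_
    split <;> norm_num
  have hint12 : Integrable (fun ω => g a * (if X 1 ω = 1 then (1:ℝ) else 0)
      + g (-a) * (if X 1 ω = -1 then (1:ℝ) else 0)) P :=
    ((hint 1).const_mul _).add ((hint (-1)).const_mul _)
  rw [h1, integral_add hint12 ((hint 0).const_mul _),
    integral_add ((hint 1).const_mul _) ((hint (-1)).const_mul _),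
    integral_const_mul, integral_const_mul, integral_const_mul,
    integral_if_eq P X hXmeas 1 hp hX1p, integral_if_eq P X hXmeas (-1) hq hX1q,
    integral_if_eq P X hXmeas 0 hr hX1r]
  ring

lemma cheb (f : Ω → ℝ) (hf : Measurable f) (C : ℝ) (hfb : ∀ ω, |f ω| ≤ C)
    (ε : ℝ) (hε : 0 < ε) :
    P {ω | ε ≤ |f ω|} ≤ ENNReal.ofReal ((∫ ω, f ω ^ 2 ∂P) / ε ^ 2) := by
  have hfint : Integrable (fun ω => f ω ^ 2) P := by
    refine integrable_bdd P (hf.pow_const 2) (C^2) fun ω => ?_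
    rw [abs_pow]
    exact pow_le_pow_left₀ (abs_nonneg _) (hfb ω) 2
  have hA : MeasurableSet {ω | ε ≤ |f ω|} := measurableSet_le measurable_const hf.abs
  have key : ε ^ 2 * (P {ω | ε ≤ |f ω|}).toReal ≤ ∫ ω, f ω ^ 2 ∂P := by
    calc ε ^ 2 * (P {ω | ε ≤ |f ω|}).toReal
        = ∫ _ω in {ω | ε ≤ |f ω|}, ε ^ 2 ∂P := by rw [setIntegral_const, smul_eq_mul, measureReal_def]; ring
      _ ≤ ∫ ω in {ω | ε ≤ |f ω|}, f ω ^ 2 ∂P := by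
          refine setIntegral_mono_on (integrableOn_const (measure_ne_top _ _))
            hfint.integrableOn hA fun ω hω => ?_
          have : ε ≤ |f ω| := hω
          calc ε ^ 2 ≤ |f ω| ^ 2 := pow_le_pow_left₀ hε.le this 2
            _ = f ω ^ 2 := sq_abs _
      _ ≤ ∫ ω, f ω ^ 2 ∂P := setIntegral_le_integral hfint (ae_of_all _ fun ω => sq_nonneg _)
  rw [← ENNReal.ofReal_toReal (measure_ne_top P _)]
  refine ENNReal.ofReal_le_ofReal ?_
  rw [le_div_iff₀ (by positivity)]
  linarith [key]

lemma tendsto_integral_comp_of_inmeasure (F : ℕ → Ω → ℝ) (G : Ω → ℝ)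
    (hFmeas : ∀ n, Measurable (F n)) (hGmeas : Measurable G)
    (hFb : ∀ n ω, |F n ω| ≤ 1) (hGb : ∀ ω, |G ω| ≤ 1)
    (hIM : TendstoInMeasure P F atTop G) (g : ℝ → ℝ) (hg : Continuous g) :
    Tendsto (fun n => ∫ ω, g (F n ω) ∂P) atTop (𝓝 (∫ ω, g (G ω) ∂P)) := by
  obtain ⟨M, hM⟩ := (isCompact_Icc (a := (-1:ℝ)) (b := 1)).exists_bound_of_continuousOn
    hg.continuousOn
  refine tendsto_of_subseq_tendsto fun ns hns => ?_
  have h2 : TendstoInMeasure P (fun k => F (ns k)) atTop G := fun ε hε => (hIM ε hε).comp hns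
  obtain ⟨ms, _, hae⟩ := h2.exists_seq_tendsto_ae
  refine ⟨ms, ?_⟩
  refine tendsto_integral_of_dominated_convergence (fun _ => M)
    (fun k => (hg.measurable.comp (hFmeas (ns (ms k)))).aestronglyMeasurable)
    (integrable_const M) (fun k => ae_of_all _ fun ω => ?_) ?_
  · exact hM _ (Set.mem_Icc.mpr (abs_le.mp (hFb (ns (ms k)) ω)))
  · filter_upwards [hae] with ω hω
    exact ((hg.tendsto _).comp hω)

lemma integral_three_point (g : ℝ → ℝ) (p q r : ℝ) (hp : 0 ≤ p) (hq : 0 ≤ q) (hr : 0 ≤ r)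
    (a : ℝ) :
    ∫ x, g x ∂(ENNReal.ofReal p • Measure.dirac a + ENNReal.ofReal r • Measure.dirac 0
      + ENNReal.ofReal q • Measure.dirac (-a))
      = p * g a + q * g (-a) + r * g 0 := by
  have hint : ∀ (c : ℝ) (x : ℝ), Integrable g (ENNReal.ofReal c • Measure.dirac x) :=
    fun c x => ((integrable_const (g x)).congr (ae_eq_dirac g).symm).smul_measure
      ENNReal.ofReal_ne_top
  rw [integral_add_measure ((hint p a).add_measure (hint r 0)) (hint q (-a)),
    integral_add_measure (hint p a) (hint r 0),
    integral_smul_measure, integral_smul_measure, integral_smul_measure,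
    integral_dirac, integral_dirac, integral_dirac,
    ENNReal.toReal_ofReal hp, ENNReal.toReal_ofReal hq, ENNReal.toReal_ofReal hr]
  simp only [smul_eq_mul]
  ring

end ERWDAux

/-- for the ERWD remembering the first and the most recent step, `Sₙ/n`
converges in distribution to the three-point law
`p·δ_{(p−q)/(2+q−p)} + r·δ₀ + q·δ_{−(p−q)/(2+q−p)}`; moreover all moments of `Sₙ/n`
converge to the corresponding moments of the limit law, in particular the mean and the
variance converge. -/
theorem erwd_first_and_recent_memory_weak_limit
    {Ω : Type*} [MeasurableSpace Ω] (P : Measure Ω) [IsProbabilityMeasure P]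
    (p q r : ℝ) (hp : 0 < p) (hp1 : p < 1) (hq : 0 < q) (hq1 : q < 1)
    (hr : 0 < r) (hr1 : r < 1) (hpqr : p + q + r = 1)
    (X : ℕ → Ω → ℝ) (hXmeas : ∀ n, Measurable (X n))
    (hXval : ∀ n, 1 ≤ n → ∀ ω, X n ω = 1 ∨ X n ω = -1 ∨ X n ω = 0)
    (hX1p : P {ω | X 1 ω = 1} = ENNReal.ofReal p)
    (hX1q : P {ω | X 1 ω = -1} = ENNReal.ofReal q)
    (hX1r : P {ω | X 1 ω = 0} = ENNReal.ofReal r)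
    (hX2p : P[Set.indicator {ω | X 2 ω = 1} (fun _ => (1 : ℝ)) | sigmaUpTo X 1]
      =ᵐ[P] fun ω =>
        p * (if X 1 ω = 1 then (1 : ℝ) else 0) + q * (if X 1 ω = -1 then (1 : ℝ) else 0))
    (hX2q : P[Set.indicator {ω | X 2 ω = -1} (fun _ => (1 : ℝ)) | sigmaUpTo X 1]
      =ᵐ[P] fun ω =>
        q * (if X 1 ω = 1 then (1 : ℝ) else 0) + p * (if X 1 ω = -1 then (1 : ℝ) else 0))
    (hcondp : ∀ n : ℕ, 2 ≤ n →
      P[Set.indicator {ω | X (n + 1) ω = 1} (fun _ => (1 : ℝ)) | sigmaUpTo X n]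
        =ᵐ[P] fun ω =>
          (p * ((if X 1 ω = 1 then (1 : ℝ) else 0) + (if X n ω = 1 then (1 : ℝ) else 0))
            + q * ((if X 1 ω = -1 then (1 : ℝ) else 0)
              + (if X n ω = -1 then (1 : ℝ) else 0))) / 2)
    (hcondq : ∀ n : ℕ, 2 ≤ n →
      P[Set.indicator {ω | X (n + 1) ω = -1} (fun _ => (1 : ℝ)) | sigmaUpTo X n]
        =ᵐ[P] fun ω =>
          (q * ((if X 1 ω = 1 then (1 : ℝ) else 0) + (if X n ω = 1 then (1 : ℝ) else 0))
            + p * ((if X 1 ω = -1 then (1 : ℝ) else 0)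
              + (if X n ω = -1 then (1 : ℝ) else 0))) / 2)
    (S : ℕ → Ω → ℝ) (hS : ∀ n ω, S n ω = ∑ k ∈ Finset.Icc 1 n, X k ω)
    :
    TendstoInDist (fun n : ℕ => Measure.map (fun ω => S n ω / n) P)
      (ENNReal.ofReal p • Measure.dirac ((p - q) / (2 + q - p))
        + ENNReal.ofReal r • Measure.dirac 0
        + ENNReal.ofReal q • Measure.dirac (-((p - q) / (2 + q - p)))) ∧
    (∀ r' : ℝ, 0 < r' →
      Tendsto (fun n : ℕ => ∫ ω, (S n ω / n) ^ r' ∂P) atTop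
        (𝓝 (∫ x, x ^ r' ∂(ENNReal.ofReal p • Measure.dirac ((p - q) / (2 + q - p))
          + ENNReal.ofReal r • Measure.dirac 0
          + ENNReal.ofReal q • Measure.dirac (-((p - q) / (2 + q - p))) : Measure ℝ)))) ∧
    Tendsto (fun n : ℕ => ∫ ω, S n ω / n ∂P) atTop
      (𝓝 ((p - q) ^ 2 / (2 + q - p))) ∧
    Tendsto (fun n : ℕ => variance (fun ω => S n ω / n) P) atTop
      (𝓝 ((p - q) ^ 2 / (2 + q - p) ^ 2 * (p + q - (p - q) ^ 2))) := by
  have h2qp : (0:ℝ) < 2 + q - p := by linarith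
  set a : ℝ := (p - q) / (2 + q - p) with ha
  set α : ℝ := (p - q) / 2 with hα
  have hαa : α * (1 + a) = a := by
    rw [ha, hα]
    field_simp
    ring
  have habs_a : |a| ≤ 1 := by
    rw [abs_le]
    constructor
    · rw [ha, le_div_iff₀ h2qp]
      linarith
    · rw [ha, div_le_one h2qp]
      linarith
  have hα2 : |α| ≤ 2⁻¹ := by
    rw [abs_le]
    constructor <;> rw [hα] <;> linarith
  have hcond' : ∀ n, 2 ≤ n →
      P[X (n+1) | sigmaUpTo X n] =ᵐ[P] fun ω => α * (X 1 ω + X n ω) :=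
    fun n hn => condexp_X_succ P X hXmeas hXval p q n hn (hcondp n hn) (hcondq n hn)
  have hXb : ∀ m, 1 ≤ m → ∀ ω, |X m ω| ≤ 1 := by
    intro m hm ω
    rcases hXval m hm ω with h | h | h <;> rw [h] <;> norm_num
  have hSmeas : ∀ n, Measurable (S n) := by
    intro n
    have : S n = fun ω => ∑ k ∈ Finset.Icc 1 n, X k ω := funext (hS n)
    rw [this]
    exact Finset.measurable_sum _ fun k _ => hXmeas k
  have hFmeas : ∀ n, Measurable (fun ω => S n ω / (n:ℝ)) := fun n =>
    (hSmeas n).div_const _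
  have hFb : ∀ n ω, |S n ω / (n:ℝ)| ≤ 1 := by
    intro n ω
    rcases Nat.eq_zero_or_pos n with h0 | h0
    · subst h0
      simp [hS 0 ω]
    · have hn : (0:ℝ) < n := by exact_mod_cast h0
      rw [abs_div, abs_of_pos hn, div_le_one hn]
      calc |S n ω| ≤ ∑ k ∈ Finset.Icc 1 n, |X k ω| := by
            rw [hS]; exact Finset.abs_sum_le_sum_abs _ _
        _ ≤ ∑ _k ∈ Finset.Icc 1 n, (1:ℝ) :=
            Finset.sum_le_sum fun k hk => hXb k (Finset.mem_Icc.mp hk).1 ω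
        _ = n := by
            rw [Finset.sum_const, Nat.card_Icc, show n + 1 - 1 = n from by omega,
              nsmul_eq_mul, mul_one]
  have hGb : ∀ ω, |a * X 1 ω| ≤ 1 := by
    intro ω
    rw [abs_mul]
    calc |a| * |X 1 ω| ≤ 1 * 1 :=
        mul_le_mul habs_a (hXb 1 (le_refl 1) ω) (abs_nonneg _) zero_le_one
      _ = 1 := one_mul 1
  have hDmeas : ∀ n, Measurable (fun ω => S n ω / (n:ℝ) - a * X 1 ω) := fun n =>
    (hFmeas n).sub ((hXmeas 1).const_mul a)
  have hDb : ∀ n ω, |S n ω / (n:ℝ) - a * X 1 ω| ≤ 2 := by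
    intro n ω
    calc |S n ω / (n:ℝ) - a * X 1 ω| ≤ |S n ω / (n:ℝ)| + |a * X 1 ω| := abs_sub _ _
      _ ≤ 2 := by linarith [hFb n ω, hGb ω]
  -- L² convergence
  have hT : Tendsto (fun n => ∫ ω, (S n ω / (n:ℝ) - a * X 1 ω)^2 ∂P) atTop (𝓝 0) := by
    refine tendsto_of_tendsto_of_tendsto_of_le_of_le' tendsto_const_nhds
      (tendsto_const_div_atTop_nhds_zero_nat 32) ?_ ?_
    · exact Eventually.of_forall fun n => integral_nonneg fun ω => sq_nonneg _
    · filter_upwards [eventually_ge_atTop 1] with n hn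
      exact erwd_L2 P X hXmeas hXval a α hαa habs_a hα2 hcond' S hS n hn
  -- convergence in measure
  have hIM : TendstoInMeasure P (fun n ω => S n ω / (n:ℝ)) atTop (fun ω => a * X 1 ω) := by
    refine tendstoInMeasure_of_ne_top fun ε hε hεt => ?_
    have hε' : 0 < ε.toReal := ENNReal.toReal_pos hε.ne' hεt
    have hset : ∀ n : ℕ, {ω | ε ≤ edist (S n ω / (n:ℝ)) (a * X 1 ω)}
        = {ω | ε.toReal ≤ dist (S n ω / (n:ℝ)) (a * X 1 ω)} := by
      intro n
      ext ω
      simp only [Set.mem_setOf_eq, edist_dist]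
      exact ENNReal.le_ofReal_iff_toReal_le hεt dist_nonneg
    simp_rw [hset]
    clear hset
    revert hε'
    generalize ε.toReal = ε
    intro hε
    have hb : ∀ n : ℕ, P {ω | ε ≤ dist (S n ω / (n:ℝ)) (a * X 1 ω)}
        ≤ ENNReal.ofReal ((∫ ω, (S n ω / (n:ℝ) - a * X 1 ω)^2 ∂P) / ε^2) := by
      intro n
      have : {ω | ε ≤ dist (S n ω / (n:ℝ)) (a * X 1 ω)}
          = {ω | ε ≤ |S n ω / (n:ℝ) - a * X 1 ω|} := by
        simp only [Real.dist_eq]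
      rw [this]
      exact cheb P _ (hDmeas n) 2 (hDb n) ε hε
    refine tendsto_of_tendsto_of_tendsto_of_le_of_le
      (tendsto_const_nhds (x := (0:ℝ≥0∞))) ?_ (fun n => zero_le) hb
    have h1 : Tendsto (fun n => (∫ ω, (S n ω / (n:ℝ) - a * X 1 ω)^2 ∂P) / ε^2)
        atTop (𝓝 0) := by
      have := hT.div_const (ε^2)
      simpa using this
    have := ENNReal.tendsto_ofReal h1
    simpa using this
  -- the master limit
  have hKey : ∀ g : ℝ → ℝ, Continuous g →
      Tendsto (fun n => ∫ ω, g (S n ω / (n:ℝ)) ∂P) atTop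
        (𝓝 (p * g a + q * g (-a) + r * g 0)) := by
    intro g hg
    have := tendsto_integral_comp_of_inmeasure P (fun n ω => S n ω / (n:ℝ))
      (fun ω => a * X 1 ω) hFmeas ((hXmeas 1).const_mul a) hFb hGb hIM g hg
    rwa [integral_comp_aX1 P X hXmeas hXval p q r hp.le hq.le hr.le hX1p hX1q hX1r a g]
      at this
  refine ⟨?_, ?_, ?_, ?_⟩
  · -- weak convergence
    intro f
    have hlim := hKey f f.continuous
    have hmap : ∀ n : ℕ, ∫ x, f x ∂(Measure.map (fun ω => S n ω / (n:ℝ)) P)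
        = ∫ ω, f (S n ω / (n:ℝ)) ∂P := fun n =>
      integral_map (hFmeas n).aemeasurable f.continuous.aestronglyMeasurable
    rw [show (fun n : ℕ => ∫ x, f x ∂(Measure.map (fun ω => S n ω / (n:ℝ)) P))
      = fun n => ∫ ω, f (S n ω / (n:ℝ)) ∂P from funext hmap,
      integral_three_point _ p q r hp.le hq.le hr.le a]
    exact hlim
  · -- moments
    intro r' hr'
    have hg : Continuous (fun x : ℝ => x ^ r') := by
      rw [continuous_iff_continuousAt]
      exact fun x => Real.continuousAt_rpow_const x r' (Or.inr hr'.le)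
    have hlim := hKey _ hg
    rw [integral_three_point _ p q r hp.le hq.le hr.le a]
    exact hlim
  · -- mean
    have hlim := hKey id continuous_id
    have : p * id a + q * id (-a) + r * id 0 = (p - q)^2 / (2 + q - p) := by
      simp only [id]
      rw [ha]
      field_simp
      ring
    rw [this] at hlim
    exact hlim
  · -- variance
    have hMem : ∀ n : ℕ, MemLp (fun ω => S n ω / (n:ℝ)) 2 P := fun n =>
      MemLp.of_bound (hFmeas n).aestronglyMeasurable 1
        (ae_of_all _ fun ω => by simpa only [Real.norm_eq_abs] using hFb n ω)
    have hvar : ∀ n : ℕ, variance (fun ω => S n ω / (n:ℝ)) P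
        = (∫ ω, (S n ω / (n:ℝ))^2 ∂P) - (∫ ω, S n ω / (n:ℝ) ∂P)^2 := by
      intro n
      rw [variance_eq_sub (hMem n)]
      congr 1
    have h2 := hKey (fun x => x^2) (continuous_pow 2)
    have h1 := hKey id continuous_id
    have hcomb := h2.sub (h1.pow 2)
    have heq : (p * a^2 + q * (-a)^2 + r * 0^2)
        - (p * id a + q * id (-a) + r * id 0)^2
        = (p - q)^2 / (2 + q - p)^2 * (p + q - (p - q)^2) := by
      simp only [id]
      rw [ha]
      field_simp
      ring
    rw [show (fun n : ℕ => variance (fun ω => S n ω / (n:ℝ)) P)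
      = fun n => (∫ ω, (S n ω / (n:ℝ))^2 ∂P) - (∫ ω, S n ω / (n:ℝ) ∂P)^2 from
        funext hvar, ← heq]
    exact hcomb
end
end
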